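/- For every ℓ with r ≤ ℓ ≤ n−1 one has, in H(χ): (V_ℓ − p^{n−ℓ−1}(p−1)·V_n) * (V_ℓ + Y_{ℓ+1}) = 0, where V_n is the identity element of H(χ) and Y_{ℓ+1} = Σ_{i=ℓ+1}^{n} V_i. -/

import Mathlib

noncomputable section

/-- `y(t) = (1,0;t,1)` as an element of `GL₂(R)`. -/
def yG {R : Type*} [CommRing R] (t : R) : GL (Fin 2) R :=
  ⟨!![1, 0; t, 1], !![1, 0; -t, 1],
   by ext i j; fin_cases i <;> fin_cases j <;> simp [Matrix.mul_apply, Fin.sum_univ_two],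
   by ext i j; fin_cases i <;> fin_cases j <;> simp [Matrix.mul_apply, Fin.sum_univ_two]⟩

/-- Membership in the subgroup `B` of invertible upper triangular matrices. -/
def inB {R : Type*} [CommRing R] (g : GL (Fin 2) R) : Prop :=
  (g : Matrix (Fin 2) (Fin 2) R) 1 0 = 0

/-- `χ_B(b) = χ(d_b)`, where `d_b` is the `(2,2)`-entry of `b` (for `b ∈ B` this entry is a
unit; the function is extended by `0` elsewhere). -/
def chiB {R : Type*} [CommRing R] (χ : Rˣ →* ℂˣ) (g : GL (Fin 2) R) : ℂ :=
  letI := Classical.dec (IsUnit ((g : Matrix (Fin 2) (Fin 2) R) 1 1))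
  if h : IsUnit ((g : Matrix (Fin 2) (Fin 2) R) 1 1) then (χ h.unit : ℂ) else 0

/-- `|B|`. -/
def cardB (R : Type*) [CommRing R] : ℕ := Nat.card {g : GL (Fin 2) R // inB g}

/-- Convolution `(f*g)(x) = |B|⁻¹ Σ_{y∈G} f(y) g(y⁻¹x)`. -/
def conv {R : Type*} [CommRing R] [Fintype R] [DecidableEq R]
    (f g : GL (Fin 2) R → ℂ) : GL (Fin 2) R → ℂ :=
  fun x => (cardB R : ℂ)⁻¹ * ∑ y : GL (Fin 2) R, f y * g (y⁻¹ * x)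

/-- Membership in the Hecke algebra `H(χ)` of `χ_B`-bi-equivariant functions on `G`. -/
def memH {R : Type*} [CommRing R] (χ : Rˣ →* ℂˣ) (f : GL (Fin 2) R → ℂ) : Prop :=
  ∀ b x b' : GL (Fin 2) R, inB b → inB b' →
    f (b * x * b') = chiB χ b * chiB χ b' * f x

/-- `V_j`: the unique element of `H(χ)` vanishing off the double coset `B y_j B` with
`V_j(y_j) = 1`, where `y_j = (1,0;p^j,1)`. -/
def isV (p n : ℕ) (χ : (ZMod (p ^ n))ˣ →* ℂˣ) (j : ℕ)
    (V : GL (Fin 2) (ZMod (p ^ n)) → ℂ) : Prop :=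
  memH χ V ∧
  (∀ x : GL (Fin 2) (ZMod (p ^ n)),
      (¬ ∃ b b' : GL (Fin 2) (ZMod (p ^ n)), inB b ∧ inB b' ∧
          x = b * yG ((p : ZMod (p ^ n)) ^ j) * b') → V x = 0) ∧
  V (yG ((p : ZMod (p ^ n)) ^ j)) = 1

/-- `χ` has conductor `p^r`: trivial on units `≡ 1 (mod p^r)`, nontrivial on units
`≡ 1 (mod p^{r−1})`. -/
def hasConductor (p n r : ℕ) (χ : (ZMod (p ^ n))ˣ →* ℂˣ) : Prop :=
  (∀ u : (ZMod (p ^ n))ˣ, (p : ZMod (p ^ n)) ^ r ∣ ((u : ZMod (p ^ n)) - 1) → χ u = 1) ∧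
  ∃ u : (ZMod (p ^ n))ˣ, (p : ZMod (p ^ n)) ^ (r - 1) ∣ ((u : ZMod (p ^ n)) - 1) ∧ χ u ≠ 1

/-! ### Auxiliary material -/

namespace S7

variable {R : Type*} [CommRing R]

/-- The `(1,1)`-entry (top left). -/
def ae (g : GL (Fin 2) R) : R := (g : Matrix (Fin 2) (Fin 2) R) 0 0
/-- The `(1,2)`-entry. -/
def be (g : GL (Fin 2) R) : R := (g : Matrix (Fin 2) (Fin 2) R) 0 1
/-- The `(2,1)`-entry. -/
def ce (g : GL (Fin 2) R) : R := (g : Matrix (Fin 2) (Fin 2) R) 1 0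
/-- The `(2,2)`-entry. -/
def de (g : GL (Fin 2) R) : R := (g : Matrix (Fin 2) (Fin 2) R) 1 1

lemma ce_mul (g h : GL (Fin 2) R) : ce (g * h) = ce g * ae h + de g * ce h := by
  simp [ce, ae, de, Units.val_mul, Matrix.mul_apply, Fin.sum_univ_two]

lemma de_mul (g h : GL (Fin 2) R) : de (g * h) = ce g * be h + de g * de h := by
  simp [de, ce, be, Units.val_mul, Matrix.mul_apply, Fin.sum_univ_two]

lemma ce_one : ce (1 : GL (Fin 2) R) = 0 := by simp [ce]

@[simp] lemma ae_yG (t : R) : ae (yG t) = 1 := rfl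
@[simp] lemma be_yG (t : R) : be (yG t) = 0 := rfl
@[simp] lemma ce_yG (t : R) : ce (yG t) = t := rfl
@[simp] lemma de_yG (t : R) : de (yG t) = 1 := rfl

lemma yG_mul (s t : R) : yG s * yG t = yG (s + t) := by
  ext i j
  fin_cases i <;> fin_cases j <;>
    simp [yG, Units.val_mul, Matrix.mul_apply, Fin.sum_univ_two, add_comm]

lemma yG_zero : yG (0 : R) = 1 := by
  ext i j
  fin_cases i <;> fin_cases j <;> simp [yG]

lemma yG_inv (t : R) : (yG t)⁻¹ = yG (-t) := by
  apply inv_eq_of_mul_eq_one_right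
  rw [yG_mul, add_neg_cancel, yG_zero]

/-- diagonal matrix `diag(u,1)` as an element of `GL₂`. -/
def Du (u : Rˣ) : GL (Fin 2) R :=
  ⟨!![(u : R), 0; 0, 1], !![((u⁻¹ : Rˣ) : R), 0; 0, 1],
   by ext i j; fin_cases i <;> fin_cases j <;> simp [Matrix.mul_apply, Fin.sum_univ_two],
   by ext i j; fin_cases i <;> fin_cases j <;> simp [Matrix.mul_apply, Fin.sum_univ_two]⟩

@[simp] lemma ae_Du (u : Rˣ) : ae (Du u) = (u : R) := rfl
@[simp] lemma be_Du (u : Rˣ) : be (Du u) = 0 := rfl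
@[simp] lemma ce_Du (u : Rˣ) : ce (Du u) = 0 := rfl
@[simp] lemma de_Du (u : Rˣ) : de (Du u) = 1 := rfl

lemma Du_conj (u : Rˣ) (s : R) : Du u⁻¹ * yG s * Du u = yG (s * (u : R)) := by
  ext i j
  fin_cases i <;> fin_cases j <;>
    simp [Du, yG, Units.val_mul, Matrix.mul_apply, Fin.sum_univ_two]

lemma inB_Du (u : Rˣ) : inB (Du u) := rfl

lemma det_isUnit (g : GL (Fin 2) R) : IsUnit (ae g * de g - be g * ce g) := by
  have h : IsUnit ((g : Matrix (Fin 2) (Fin 2) R).det) :=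
    (Matrix.isUnit_iff_isUnit_det _).mp g.isUnit
  rwa [Matrix.det_fin_two] at h

/-- `chiU χ w = χ(w)` if `w` is a unit, `0` otherwise. -/
def chiU (χ : Rˣ →* ℂˣ) (w : R) : ℂ :=
  letI := Classical.dec (IsUnit w)
  if h : IsUnit w then (χ h.unit : ℂ) else 0

lemma chiB_eq (χ : Rˣ →* ℂˣ) (g : GL (Fin 2) R) : chiB χ g = chiU χ (de g) := rfl

lemma chiU_unit (χ : Rˣ →* ℂˣ) {w : R} (h : IsUnit w) : chiU χ w = (χ h.unit : ℂ) := by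
  unfold chiU
  exact dif_pos h

lemma chiU_one (χ : Rˣ →* ℂˣ) : chiU χ (1 : R) = 1 := by
  rw [chiU_unit χ isUnit_one]
  have : (isUnit_one : IsUnit (1 : R)).unit = 1 := Units.ext (by simp)
  rw [this, map_one, Units.val_one]

lemma chiU_mul (χ : Rˣ →* ℂˣ) {w w' : R} (h : IsUnit w) (h' : IsUnit w') :
    chiU χ (w * w') = chiU χ w * chiU χ w' := by
  rw [chiU_unit χ (h.mul h'), chiU_unit χ h, chiU_unit χ h']
  have : (h.mul h').unit = h.unit * h'.unit := Units.ext (by simp)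
  rw [this, map_mul, Units.val_mul]

variable {p n : ℕ} [Fact p.Prime]

lemma pnil : IsNilpotent ((p : ZMod (p ^ n))) :=
  ⟨n, by rw [← Nat.cast_pow]; exact ZMod.natCast_self _⟩

lemma nilmul (z : ZMod (p ^ n)) : IsNilpotent ((p : ZMod (p ^ n)) * z) :=
  (Commute.all _ z).isNilpotent_mul_right pnil

lemma L1 {i : ℕ} {z : ZMod (p ^ n)}
    (h : (p : ZMod (p ^ n)) ^ i = (p : ZMod (p ^ n)) ^ (i + 1) * z) : n ≤ i := by
  have hu : IsUnit (1 - (p : ZMod (p ^ n)) * z) := (nilmul z).isUnit_one_sub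
  have h0 : (p : ZMod (p ^ n)) ^ i * (1 - (p : ZMod (p ^ n)) * z) = 0 := by
    have h2 : (p : ZMod (p ^ n)) ^ i * ((p : ZMod (p ^ n)) * z)
        = (p : ZMod (p ^ n)) ^ (i + 1) * z := by ring
    rw [mul_sub, mul_one, h2, ← h, sub_self]
  obtain ⟨w, hw⟩ := hu.exists_right_inv
  have hz : (p : ZMod (p ^ n)) ^ i = 0 := by
    calc (p : ZMod (p ^ n)) ^ i
        = (p : ZMod (p ^ n)) ^ i * ((1 - (p : ZMod (p ^ n)) * z) * w) := by rw [hw, mul_one]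
      _ = ((p : ZMod (p ^ n)) ^ i * (1 - (p : ZMod (p ^ n)) * z)) * w := by ring
      _ = 0 := by rw [h0, zero_mul]
  have h3 : ((p ^ i : ℕ) : ZMod (p ^ n)) = 0 := by push_cast; exact hz
  have hd : p ^ n ∣ p ^ i := (ZMod.natCast_eq_zero_iff _ _).mp h3
  exact (Nat.pow_dvd_pow_iff_le_right (Fact.out : p.Prime).one_lt).mp hd

/-- two unit-exact valuations must agree -/
lemma exact_val {c : ZMod (p ^ n)} {i j : ℕ} {u w : (ZMod (p ^ n))ˣ}
    (hij : i < j) (hjn : j ≤ n)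
    (hj : c = (p : ZMod (p ^ n)) ^ j * u) (hi : c = (p : ZMod (p ^ n)) ^ i * w) : False := by
  have h1 : (p : ZMod (p ^ n)) ^ i = (p : ZMod (p ^ n)) ^ j * ((u : ZMod (p ^ n)) * ↑w⁻¹) := by
    have h2 : (p : ZMod (p ^ n)) ^ i * (w : ZMod (p ^ n)) * ↑w⁻¹
        = (p : ZMod (p ^ n)) ^ j * (u : ZMod (p ^ n)) * ↑w⁻¹ := by rw [← hi, ← hj]
    have h3 : (w : ZMod (p ^ n)) * ↑w⁻¹ = 1 := by
      rw [← Units.val_mul, mul_inv_cancel, Units.val_one]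
    calc (p : ZMod (p ^ n)) ^ i
        = (p : ZMod (p ^ n)) ^ i * ((w : ZMod (p ^ n)) * ↑w⁻¹) := by rw [h3, mul_one]
      _ = (p : ZMod (p ^ n)) ^ i * (w : ZMod (p ^ n)) * ↑w⁻¹ := by ring
      _ = (p : ZMod (p ^ n)) ^ j * (u : ZMod (p ^ n)) * ↑w⁻¹ := h2
      _ = (p : ZMod (p ^ n)) ^ j * ((u : ZMod (p ^ n)) * ↑w⁻¹) := by ring
  have h4 : (p : ZMod (p ^ n)) ^ i
      = (p : ZMod (p ^ n)) ^ (i + 1)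
        * ((p : ZMod (p ^ n)) ^ (j - i - 1) * ((u : ZMod (p ^ n)) * ↑w⁻¹)) := by
    rw [h1]
    have h5 : (p : ZMod (p ^ n)) ^ j
        = (p : ZMod (p ^ n)) ^ (i + 1) * (p : ZMod (p ^ n)) ^ (j - i - 1) := by
      rw [← pow_add]; congr 1; omega
    rw [h5]; ring
  have := L1 h4
  omega

lemma neZeroPn : NeZero (p ^ n) := ⟨pow_ne_zero n (Fact.out : p.Prime).ne_zero⟩

lemma dvd_val_of_dvd {i : ℕ} (hin : i ≤ n) {c : ZMod (p ^ n)}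
    (h : (p : ZMod (p ^ n)) ^ i ∣ c) : p ^ i ∣ c.val := by
  haveI := @neZeroPn p n _
  obtain ⟨w, hw⟩ := h
  have h1 : ((p ^ i * w.val : ℕ) : ZMod (p ^ n)) = c := by
    push_cast [ZMod.natCast_zmod_val]; rw [hw]
  have h2 : c.val = (p ^ i * w.val) % p ^ n := by
    rw [← h1, ZMod.val_natCast]
  rw [h2]
  exact (Nat.dvd_mod_iff (pow_dvd_pow p hin)).mpr (dvd_mul_right _ _)

/-- existence of exact valuation -/
lemma exists_val {m : ℕ} (hm : m ≤ n) {c : ZMod (p ^ n)}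
    (hc : (p : ZMod (p ^ n)) ^ m ∣ c) :
    ∃ j, m ≤ j ∧ j ≤ n ∧ ∃ u : (ZMod (p ^ n))ˣ, c = (p : ZMod (p ^ n)) ^ j * u := by
  haveI := @neZeroPn p n _
  have hp : p.Prime := Fact.out
  by_cases h0 : c = 0
  · refine ⟨n, hm, le_refl n, 1, ?_⟩
    rw [h0, Units.val_one, mul_one, ← Nat.cast_pow, ZMod.natCast_self]
  · have hval : c.val ≠ 0 := fun h => h0 (by rw [← ZMod.natCast_zmod_val c, h, Nat.cast_zero])
    set j := (c.val).factorization p with hj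
    have hpd : p ^ j ∣ c.val := Nat.ordProj_dvd _ _
    set k := c.val / p ^ j with hk
    have hck : c.val = p ^ j * k := (Nat.ordProj_mul_ordCompl_eq_self c.val p).symm
    have hknd : ¬ p ∣ k := Nat.not_dvd_ordCompl hp hval
    have hjn : j ≤ n := by
      have h1 : p ^ j ≤ c.val := Nat.le_of_dvd (Nat.pos_of_ne_zero hval) hpd
      have h2 : c.val < p ^ n := ZMod.val_lt c
      exact le_of_lt ((Nat.pow_lt_pow_iff_right hp.one_lt).mp (lt_of_le_of_lt h1 h2))
    have hmj : m ≤ j := by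
      have := dvd_val_of_dvd hm hc
      exact (Nat.Prime.pow_dvd_iff_le_factorization hp hval).mp this
    have hku : IsUnit ((k : ZMod (p ^ n))) := by
      rw [ZMod.isUnit_iff_coprime]
      exact (Nat.coprime_comm.mp ((Nat.Prime.coprime_iff_not_dvd hp).mpr hknd)).pow_right n
    refine ⟨j, hmj, hjn, hku.unit, ?_⟩
    rw [IsUnit.unit_spec]
    conv_lhs => rw [← ZMod.natCast_zmod_val c]
    rw [hck]; push_cast; ring

lemma chi_congr {r : ℕ} (χ : (ZMod (p ^ n))ˣ →* ℂˣ)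
    (hχ : ∀ u : (ZMod (p ^ n))ˣ, (p : ZMod (p ^ n)) ^ r ∣ ((u : ZMod (p ^ n)) - 1) → χ u = 1)
    {w w' : ZMod (p ^ n)} (h : IsUnit w) (h' : IsUnit w')
    (hd : (p : ZMod (p ^ n)) ^ r ∣ (w - w')) : chiU χ w = chiU χ w' := by
  set u : (ZMod (p ^ n))ˣ := h'.unit⁻¹ * h.unit with hu
  have hdiff : (u : ZMod (p ^ n)) - 1 = (↑h'.unit⁻¹ : ZMod (p ^ n)) * (w - w') := by
    have h1 : (↑h'.unit⁻¹ : ZMod (p ^ n)) * w' = 1 := h'.val_inv_mul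
    rw [hu, mul_sub]
    push_cast
    rw [h.unit_spec, h1]
  have hχu : χ u = 1 := hχ u (hdiff ▸ hd.mul_left _)
  have h6 : h.unit = h'.unit * u := by rw [hu, mul_inv_cancel_left]
  rw [chiU_unit χ h, chiU_unit χ h', h6, map_mul, hχu, mul_one]

lemma d_unit {g : GL (Fin 2) (ZMod (p ^ n))} (hc : (p : ZMod (p ^ n)) ∣ ce g) :
    IsUnit (de g) := by
  obtain ⟨t, ht⟩ := hc
  have hnil : IsNilpotent (be g * ce g) := by
    have h1 : be g * ce g = (p : ZMod (p ^ n)) * (be g * t) := by rw [ht]; ring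
    rw [h1]; exact nilmul _
  have had : IsUnit (ae g * de g) := by
    have h2 : ae g * de g = be g * ce g + (ae g * de g - be g * ce g) := by ring
    rw [h2]
    exact hnil.isUnit_add_right_of_commute (det_isUnit g) (Commute.all _ _)
  exact isUnit_of_mul_isUnit_right had

lemma dvd_pow_of_le {i : ℕ} (hi : 1 ≤ i) : (p : ZMod (p ^ n)) ∣ (p : ZMod (p ^ n)) ^ i :=
  dvd_pow_self _ (by omega)

lemma ce_inv_dvd {i : ℕ} (hi : 1 ≤ i) {g : GL (Fin 2) (ZMod (p ^ n))}
    (h : (p : ZMod (p ^ n)) ^ i ∣ ce g) : (p : ZMod (p ^ n)) ^ i ∣ ce g⁻¹ := by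
  have hd : IsUnit (de g) := d_unit ((dvd_pow_of_le hi).trans h)
  have h0 : ce g * ae g⁻¹ + de g * ce g⁻¹ = 0 := by
    rw [← ce_mul, mul_inv_cancel, ce_one]
  have h1 : ce g⁻¹ = (↑hd.unit⁻¹ : ZMod (p ^ n)) * (-(ce g * ae g⁻¹)) := by
    have h2 : de g * ce g⁻¹ = -(ce g * ae g⁻¹) := by linear_combination h0
    calc ce g⁻¹ = (↑hd.unit⁻¹ : ZMod (p ^ n)) * (de g * ce g⁻¹) := by
          rw [← mul_assoc, hd.val_inv_mul, one_mul]
      _ = (↑hd.unit⁻¹ : ZMod (p ^ n)) * (-(ce g * ae g⁻¹)) := by rw [h2]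
  rw [h1]
  exact Dvd.dvd.mul_left (dvd_neg.mpr (h.mul_right _)) _

/-- `Yf m` is the function supported on `K₀(p^m)` given there by `χ(d)`. -/
def Yf (χ : (ZMod (p ^ n))ˣ →* ℂˣ) (m : ℕ) (x : GL (Fin 2) (ZMod (p ^ n))) : ℂ :=
  letI := Classical.dec ((p : ZMod (p ^ n)) ^ m ∣ ce x)
  if (p : ZMod (p ^ n)) ^ m ∣ ce x then chiU χ (de x) else 0

lemma mem_coset {i : ℕ} {x : GL (Fin 2) (ZMod (p ^ n))}
    (h : ∃ b b' : GL (Fin 2) (ZMod (p ^ n)), inB b ∧ inB b' ∧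
        x = b * yG ((p : ZMod (p ^ n)) ^ i) * b') :
    ∃ w : (ZMod (p ^ n))ˣ, ce x = (p : ZMod (p ^ n)) ^ i * w := by
  obtain ⟨b, b', hb, hb', hx⟩ := h
  have hdb : IsUnit (de b) := by
    have := det_isUnit b
    rw [show ce b = 0 from hb] at this
    simp only [mul_zero, sub_zero] at this
    exact isUnit_of_mul_isUnit_right this
  have hab' : IsUnit (ae b') := by
    have := det_isUnit b'
    rw [show ce b' = 0 from hb'] at this
    simp only [mul_zero, sub_zero] at this
    exact isUnit_of_mul_isUnit_left this
  refine ⟨hdb.unit * hab'.unit, ?_⟩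
  have h1 : ce (b * yG ((p : ZMod (p ^ n)) ^ i)) = de b * (p : ZMod (p ^ n)) ^ i := by
    rw [ce_mul]; rw [show ce b = 0 from hb]; simp
  have h2 : ce x = de b * (p : ZMod (p ^ n)) ^ i * ae b' := by
    rw [hx, ce_mul, h1, show ce b' = 0 from hb']
    have h3 : de (b * yG ((p : ZMod (p ^ n)) ^ i)) = de b := by
      rw [de_mul]; rw [show ce b = 0 from hb]; simp
    rw [h3]; ring
  rw [h2, Units.val_mul, hdb.unit_spec, hab'.unit_spec]; ring

lemma de_unit_of_inB {g : GL (Fin 2) R} (hb : inB g) : IsUnit (de g) := by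
  have h := det_isUnit g
  rw [show ce g = 0 from hb] at h
  simp only [mul_zero, sub_zero] at h
  exact isUnit_of_mul_isUnit_right h

lemma ae_unit_of_inB {g : GL (Fin 2) R} (hb : inB g) : IsUnit (ae g) := by
  have h := det_isUnit g
  rw [show ce g = 0 from hb] at h
  simp only [mul_zero, sub_zero] at h
  exact isUnit_of_mul_isUnit_left h

end S7

namespace S7

variable {p n : ℕ} [Fact p.Prime]

lemma sumV {r : ℕ} (χ : (ZMod (p ^ n))ˣ →* ℂˣ)
    (hχ1 : ∀ u : (ZMod (p ^ n))ˣ, (p : ZMod (p ^ n)) ^ r ∣ ((u : ZMod (p ^ n)) - 1) → χ u = 1)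
    (V : ℕ → GL (Fin 2) (ZMod (p ^ n)) → ℂ)
    (hV : ∀ j, r ≤ j → j ≤ n → isV p n χ j (V j))
    (hr : 1 ≤ r) {m : ℕ} (hm : r ≤ m) (hmn : m ≤ n) (x : GL (Fin 2) (ZMod (p ^ n))) :
    ∑ i ∈ Finset.Icc m n, V i x = Yf χ m x := by
  classical
  have h1m : 1 ≤ m := hr.trans hm
  by_cases hc : (p : ZMod (p ^ n)) ^ m ∣ ce x
  · obtain ⟨j, hj1, hj2, u, hu⟩ := exists_val hmn hc
    have hpc : (p : ZMod (p ^ n)) ∣ ce x := (dvd_pow_of_le h1m).trans hc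
    have hdx : IsUnit (de x) := d_unit hpc
    set u' : (ZMod (p ^ n))ˣ := hdx.unit⁻¹ * u with hu'
    set t : ZMod (p ^ n) := (p : ZMod (p ^ n)) ^ j * ↑u' with ht
    have hct : de x * t = ce x := by
      calc de x * t = ((p : ZMod (p ^ n)) ^ j * ↑u) * (de x * ↑hdx.unit⁻¹) := by
            rw [ht, hu']; push_cast; ring
        _ = (p : ZMod (p ^ n)) ^ j * ↑u := by rw [hdx.mul_val_inv, mul_one]
        _ = ce x := hu.symm
    set b0 : GL (Fin 2) (ZMod (p ^ n)) := x * yG (-t) with hb0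
    have hib0 : ce b0 = 0 := by
      rw [hb0, ce_mul, ae_yG, ce_yG, mul_one]
      linear_combination - hct
    have hdb0 : de b0 = de x := by
      rw [hb0, de_mul, be_yG, de_yG, mul_zero, zero_add, mul_one]
    set b : GL (Fin 2) (ZMod (p ^ n)) := b0 * Du u'⁻¹ with hb
    have hib : inB b := by
      show ce b = 0
      rw [hb, ce_mul, ce_Du, mul_zero, add_zero, hib0, zero_mul]
    have hdb : de b = de x := by
      rw [hb, de_mul, be_Du, de_Du, mul_zero, zero_add, mul_one, hdb0]
    have hxdec : x = b * yG ((p : ZMod (p ^ n)) ^ j) * Du u' := by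
      symm
      have h7 : b * yG ((p : ZMod (p ^ n)) ^ j) * Du u'
          = b0 * (Du u'⁻¹ * yG ((p : ZMod (p ^ n)) ^ j) * Du u') := by
        rw [hb]; group
      rw [h7, Du_conj, ← ht, hb0, mul_assoc, yG_mul, neg_add_cancel, yG_zero, mul_one]
    have hVj : V j x = chiU χ (de x) := by
      have hmem := (hV j (hm.trans hj1) hj2).1 b (yG ((p : ZMod (p ^ n)) ^ j)) (Du u') hib
        (inB_Du u')
      rw [← hxdec] at hmem
      rw [hmem, (hV j (hm.trans hj1) hj2).2.2, chiB_eq, chiB_eq, hdb, de_Du, chiU_one,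
        mul_one, mul_one]
    have hzero : ∀ i ∈ Finset.Icc m n, i ≠ j → V i x = 0 := by
      intro i hi hne
      rw [Finset.mem_Icc] at hi
      apply (hV i (hm.trans hi.1) hi.2).2.1
      intro hmem
      obtain ⟨w, hw⟩ := mem_coset hmem
      rcases lt_or_gt_of_ne hne with hlt | hgt
      · exact exact_val hlt hj2 hu hw
      · exact exact_val hgt hi.2 hw hu
    rw [Finset.sum_eq_single_of_mem j (Finset.mem_Icc.mpr ⟨hj1, hj2⟩) hzero, hVj]
    unfold Yf
    rw [if_pos hc]
  · have hall : ∀ i ∈ Finset.Icc m n, V i x = 0 := by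
      intro i hi
      rw [Finset.mem_Icc] at hi
      apply (hV i (hm.trans hi.1) hi.2).2.1
      intro hmem
      obtain ⟨w, hw⟩ := mem_coset hmem
      exact hc (by
        rw [hw]
        exact Dvd.dvd.mul_right (pow_dvd_pow _ hi.1) _)
    rw [Finset.sum_eq_zero hall]
    unfold Yf
    rw [if_neg hc]

lemma sum_yy {r ℓ m : ℕ} (χ : (ZMod (p ^ n))ˣ →* ℂˣ)
    (hχ1 : ∀ u : (ZMod (p ^ n))ˣ, (p : ZMod (p ^ n)) ^ r ∣ ((u : ZMod (p ^ n)) - 1) → χ u = 1)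
    (hr : 1 ≤ r) (hrl : r ≤ ℓ) (hlm : ℓ ≤ m) (hmn : m ≤ n)
    (x : GL (Fin 2) (ZMod (p ^ n))) :
    ∑ y : GL (Fin 2) (ZMod (p ^ n)), Yf χ m y * Yf χ ℓ (y⁻¹ * x)
      = ((Nat.card {y : GL (Fin 2) (ZMod (p ^ n)) // (p : ZMod (p ^ n)) ^ m ∣ ce y} : ℕ) : ℂ)
          * Yf χ ℓ x := by
  classical
  have h1l : 1 ≤ ℓ := hr.trans hrl
  by_cases hx : (p : ZMod (p ^ n)) ^ ℓ ∣ ce x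
  · have step : ∀ y : GL (Fin 2) (ZMod (p ^ n)),
        Yf χ m y * Yf χ ℓ (y⁻¹ * x)
          = if (p : ZMod (p ^ n)) ^ m ∣ ce y then chiU χ (de x) else 0 := by
      intro y
      by_cases hy : (p : ZMod (p ^ n)) ^ m ∣ ce y
      · rw [if_pos hy]
        have hyl : (p : ZMod (p ^ n)) ^ ℓ ∣ ce y := (pow_dvd_pow _ hlm).trans hy
        have hyi : (p : ZMod (p ^ n)) ^ ℓ ∣ ce y⁻¹ := ce_inv_dvd h1l hyl
        have hz : (p : ZMod (p ^ n)) ^ ℓ ∣ ce (y⁻¹ * x) := by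
          rw [ce_mul]
          exact dvd_add (hyi.mul_right _) (hx.mul_left _)
        have hYm : Yf χ m y = chiU χ (de y) := by unfold Yf; rw [if_pos hy]
        have hYl : Yf χ ℓ (y⁻¹ * x) = chiU χ (de (y⁻¹ * x)) := by unfold Yf; rw [if_pos hz]
        rw [hYm, hYl]
        have hdy : IsUnit (de y) := d_unit ((dvd_pow_of_le h1l).trans hyl)
        have hdz : IsUnit (de (y⁻¹ * x)) := d_unit ((dvd_pow_of_le h1l).trans hz)
        have hdxeq : de x = ce y * be (y⁻¹ * x) + de y * de (y⁻¹ * x) := by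
          conv_lhs => rw [← mul_inv_cancel_left y x]
          rw [de_mul]
        have hdxu : IsUnit (de x) := by
          rw [hdxeq]
          have hnil : IsNilpotent (ce y * be (y⁻¹ * x)) := by
            obtain ⟨s, hs⟩ := (dvd_pow_of_le h1l).trans hyl
            rw [hs, show (p : ZMod (p ^ n)) * s * be (y⁻¹ * x)
              = (p : ZMod (p ^ n)) * (s * be (y⁻¹ * x)) by ring]
            exact nilmul _
          exact hnil.isUnit_add_right_of_commute (hdy.mul hdz) (Commute.all _ _)
        have hcongr : chiU χ (de x) = chiU χ (de y * de (y⁻¹ * x)) := by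
          apply chi_congr χ hχ1 hdxu (hdy.mul hdz)
          have hdiff : de x - de y * de (y⁻¹ * x) = ce y * be (y⁻¹ * x) := by
            rw [hdxeq]; ring
          rw [hdiff]
          exact Dvd.dvd.mul_right ((pow_dvd_pow _ hrl).trans hyl) _
        rw [← chiU_mul χ hdy hdz, ← hcongr]
      · rw [if_neg hy]
        have hYm : Yf χ m y = 0 := by unfold Yf; rw [if_neg hy]
        rw [hYm, zero_mul]
    rw [Finset.sum_congr rfl (fun y _ => step y), Finset.sum_ite, Finset.sum_const,
      Finset.sum_const_zero, add_zero, nsmul_eq_mul]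
    have hYx : Yf χ ℓ x = chiU χ (de x) := by unfold Yf; rw [if_pos hx]
    rw [hYx]
    congr 2
    rw [Nat.card_eq_fintype_card, Fintype.card_subtype]
  · have hx0 : Yf χ ℓ x = 0 := by unfold Yf; rw [if_neg hx]
    rw [hx0, mul_zero]
    apply Finset.sum_eq_zero
    intro y _
    by_cases hy : (p : ZMod (p ^ n)) ^ m ∣ ce y
    · have hyl : (p : ZMod (p ^ n)) ^ ℓ ∣ ce y := (pow_dvd_pow _ hlm).trans hy
      have hnz : ¬ (p : ZMod (p ^ n)) ^ ℓ ∣ ce (y⁻¹ * x) := by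
        intro hz
        apply hx
        have hcx : ce x = ce (y * (y⁻¹ * x)) := by rw [mul_inv_cancel_left]
        rw [hcx, ce_mul]
        exact dvd_add (hyl.mul_right _) (hz.mul_left _)
      have hY0 : Yf χ ℓ (y⁻¹ * x) = 0 := by unfold Yf; rw [if_neg hnz]
      rw [hY0, mul_zero]
    · have hY0 : Yf χ m y = 0 := by unfold Yf; rw [if_neg hy]
      rw [hY0, zero_mul]

lemma cardT {m : ℕ} (hmn : m ≤ n) :
    Nat.card {t : ZMod (p ^ n) // (p : ZMod (p ^ n)) ^ m ∣ t} = p ^ (n - m) := by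
  haveI := @neZeroPn p n _
  haveI : NeZero (p ^ (n - m)) := ⟨pow_ne_zero _ (Fact.out : p.Prime).ne_zero⟩
  have hp1 : 1 < p := (Fact.out : p.Prime).one_lt
  set F : ZMod (p ^ (n - m)) → {t : ZMod (p ^ n) // (p : ZMod (p ^ n)) ^ m ∣ t} :=
    fun k => ⟨((p ^ m * k.val : ℕ) : ZMod (p ^ n)), ⟨((k.val : ℕ) : ZMod (p ^ n)), by
      push_cast; ring⟩⟩ with hF
  have hval : ∀ k : ZMod (p ^ (n - m)),
      ((p ^ m * k.val : ℕ) : ZMod (p ^ n)).val = p ^ m * k.val := by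
    intro k
    apply ZMod.val_cast_of_lt
    calc p ^ m * k.val < p ^ m * p ^ (n - m) :=
          (Nat.mul_lt_mul_left (pow_pos (by omega) m)).mpr (ZMod.val_lt k)
      _ = p ^ n := by rw [← pow_add]; congr 1; omega
  have hbij : Function.Bijective F := by
    constructor
    · intro k k' hkk
      have h0 : ((p ^ m * k.val : ℕ) : ZMod (p ^ n)) = ((p ^ m * k'.val : ℕ) : ZMod (p ^ n)) :=
        congrArg Subtype.val hkk
      have h1 : p ^ m * k.val = p ^ m * k'.val := by
        rw [← hval k, ← hval k', h0]
      have h2 : k.val = k'.val := Nat.eq_of_mul_eq_mul_left (pow_pos (by omega) m) h1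
      calc k = ((k.val : ℕ) : ZMod (p ^ (n - m))) := (ZMod.natCast_zmod_val k).symm
        _ = ((k'.val : ℕ) : ZMod (p ^ (n - m))) := by rw [h2]
        _ = k' := ZMod.natCast_zmod_val k'
    · rintro ⟨t, ht⟩
      have htv : p ^ m ∣ t.val := dvd_val_of_dvd hmn ht
      refine ⟨((t.val / p ^ m : ℕ) : ZMod (p ^ (n - m))), ?_⟩
      apply Subtype.ext
      show ((p ^ m * ((t.val / p ^ m : ℕ) : ZMod (p ^ (n - m))).val : ℕ) : ZMod (p ^ n)) = t
      have hlt : t.val / p ^ m < p ^ (n - m) := by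
        apply Nat.div_lt_of_lt_mul
        calc t.val < p ^ n := ZMod.val_lt t
          _ = p ^ m * p ^ (n - m) := by rw [← pow_add]; congr 1; omega
      rw [ZMod.val_cast_of_lt hlt, Nat.mul_div_cancel' htv, ZMod.natCast_zmod_val]
  rw [← Nat.card_zmod (p ^ (n - m))]
  exact (Nat.card_eq_of_bijective F hbij).symm

lemma cardK {m : ℕ} (h1 : 1 ≤ m) (hmn : m ≤ n) :
    Nat.card {y : GL (Fin 2) (ZMod (p ^ n)) // (p : ZMod (p ^ n)) ^ m ∣ ce y}
      = p ^ (n - m) * cardB (ZMod (p ^ n)) := by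
  set F : {t : ZMod (p ^ n) // (p : ZMod (p ^ n)) ^ m ∣ t}
        × {b : GL (Fin 2) (ZMod (p ^ n)) // inB b}
      → {y : GL (Fin 2) (ZMod (p ^ n)) // (p : ZMod (p ^ n)) ^ m ∣ ce y} :=
    fun z => ⟨z.2.1 * yG z.1.1, by
      rw [ce_mul, ae_yG, ce_yG, show ce z.2.1 = 0 from z.2.2, zero_mul, zero_add]
      exact z.1.2.mul_left _⟩ with hF
  have hde : ∀ (b : GL (Fin 2) (ZMod (p ^ n))) (t : ZMod (p ^ n)), de (b * yG t) = de b := by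
    intro b t
    rw [de_mul, be_yG, de_yG, mul_zero, zero_add, mul_one]
  have hce : ∀ (b : GL (Fin 2) (ZMod (p ^ n))) (t : ZMod (p ^ n)), inB b →
      ce (b * yG t) = de b * t := by
    intro b t hb
    rw [ce_mul, ae_yG, ce_yG, show ce b = 0 from hb, zero_mul, zero_add]
  have hbij : Function.Bijective F := by
    constructor
    · rintro ⟨⟨t, ht⟩, ⟨b, hb⟩⟩ ⟨⟨t', ht'⟩, ⟨b', hb'⟩⟩ h
      have h0 : b * yG t = b' * yG t' := congrArg Subtype.val h
      have hdbb : de b = de b' := by rw [← hde b t, ← hde b' t', h0]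
      have hcc : de b * t = de b' * t' := by
        rw [← hce b t hb, ← hce b' t' hb', h0]
      have hdbu : IsUnit (de b) := de_unit_of_inB hb
      have htt : t = t' := by
        rw [← hdbb] at hcc
        calc t = ↑hdbu.unit⁻¹ * (de b * t) := by rw [← mul_assoc, hdbu.val_inv_mul, one_mul]
          _ = ↑hdbu.unit⁻¹ * (de b * t') := by rw [hcc]
          _ = t' := by rw [← mul_assoc, hdbu.val_inv_mul, one_mul]
      have hbb : b = b' := by
        have := h0
        rw [htt] at this
        exact mul_right_cancel this
      simp only [Prod.mk.injEq, Subtype.mk.injEq]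
      exact ⟨htt, hbb⟩
    · rintro ⟨y, hy⟩
      have hdy : IsUnit (de y) := d_unit ((dvd_pow_of_le h1).trans hy)
      set t : ZMod (p ^ n) := ↑hdy.unit⁻¹ * ce y with htdef
      have ht : (p : ZMod (p ^ n)) ^ m ∣ t := hy.mul_left _
      set b : GL (Fin 2) (ZMod (p ^ n)) := y * yG (-t) with hbdef
      have hb : inB b := by
        show ce b = 0
        rw [hbdef, ce_mul, ae_yG, ce_yG, mul_one]
        have : de y * t = ce y := by
          rw [htdef, ← mul_assoc, hdy.mul_val_inv, one_mul]
        linear_combination - this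
      refine ⟨⟨⟨t, ht⟩, ⟨b, hb⟩⟩, ?_⟩
      apply Subtype.ext
      show b * yG t = y
      rw [hbdef, mul_assoc, yG_mul, neg_add_cancel, yG_zero, mul_one]
  rw [← Nat.card_eq_of_bijective F hbij, Nat.card_prod, cardT hmn]
  rfl

end S7

/-- For `r ≤ ℓ ≤ n−1`: `(V_ℓ − p^{n−ℓ−1}(p−1)·V_n) * (V_ℓ + Y_{ℓ+1}) = 0` in `H(χ)`,
where `V_n` is the identity of `H(χ)` and `Y_{ℓ+1} = Σ_{i=ℓ+1}^n V_i`. -/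
theorem stmt7 (p n r : ℕ) [Fact p.Prime] (hn : 1 ≤ n) (hr : 1 ≤ r) (hrn : r ≤ n)
    (χ : (ZMod (p ^ n))ˣ →* ℂˣ) (hχ : hasConductor p n r χ)
    (V : ℕ → GL (Fin 2) (ZMod (p ^ n)) → ℂ)
    (hV : ∀ j, r ≤ j → j ≤ n → isV p n χ j (V j))
    (ℓ : ℕ) (hℓ : r ≤ ℓ) (hℓn : ℓ ≤ n - 1) :
    ∀ x, conv (fun t => V ℓ t - (p : ℂ) ^ (n - ℓ - 1) * ((p : ℂ) - 1) * V n t)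
        (fun t => V ℓ t + ∑ i ∈ Finset.Icc (ℓ + 1) n, V i t) x = 0 := by
  intro x
  have hl1 : ℓ + 1 ≤ n := by omega
  have hχ1 := hχ.1
  have hsplit : ∀ f : ℕ → ℂ,
      ∑ i ∈ Finset.Icc ℓ n, f i = f ℓ + ∑ i ∈ Finset.Icc (ℓ + 1) n, f i := by
    intro f
    have h1 : Finset.Icc ℓ n = insert ℓ (Finset.Icc (ℓ + 1) n) := by
      ext k; simp only [Finset.mem_Icc, Finset.mem_insert]; omega
    rw [h1, Finset.sum_insert (by simp only [Finset.mem_Icc]; omega)]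
  have hVl : ∀ t, V ℓ t = S7.Yf χ ℓ t - S7.Yf χ (ℓ + 1) t := by
    intro t
    have h1 := S7.sumV χ hχ1 V hV hr hℓ (by omega) t
    have h2 := S7.sumV χ hχ1 V hV hr (by omega : r ≤ ℓ + 1) hl1 t
    rw [hsplit (fun i => V i t)] at h1
    linear_combination h1 - h2
  have hVn : ∀ t, V n t = S7.Yf χ n t := by
    intro t
    have h2 := S7.sumV χ hχ1 V hV hr hrn (le_refl n) t
    rwa [Finset.Icc_self, Finset.sum_singleton] at h2
  have hG : ∀ t, V ℓ t + ∑ i ∈ Finset.Icc (ℓ + 1) n, V i t = S7.Yf χ ℓ t := by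
    intro t
    rw [← hsplit (fun i => V i t)]
    exact S7.sumV χ hχ1 V hV hr hℓ (by omega) t
  show (cardB (ZMod (p ^ n)) : ℂ)⁻¹ * ∑ y : GL (Fin 2) (ZMod (p ^ n)),
      (V ℓ y - (p : ℂ) ^ (n - ℓ - 1) * ((p : ℂ) - 1) * V n y)
        * (V ℓ (y⁻¹ * x) + ∑ i ∈ Finset.Icc (ℓ + 1) n, V i (y⁻¹ * x)) = 0
  have hterm : ∀ y : GL (Fin 2) (ZMod (p ^ n)),
      (V ℓ y - (p : ℂ) ^ (n - ℓ - 1) * ((p : ℂ) - 1) * V n y)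
        * (V ℓ (y⁻¹ * x) + ∑ i ∈ Finset.Icc (ℓ + 1) n, V i (y⁻¹ * x))
      = S7.Yf χ ℓ y * S7.Yf χ ℓ (y⁻¹ * x) - S7.Yf χ (ℓ + 1) y * S7.Yf χ ℓ (y⁻¹ * x)
        - (p : ℂ) ^ (n - ℓ - 1) * ((p : ℂ) - 1) * (S7.Yf χ n y * S7.Yf χ ℓ (y⁻¹ * x)) := by
    intro y
    rw [hVl y, hVn y, hG (y⁻¹ * x)]
    ring
  rw [Finset.sum_congr rfl fun y _ => hterm y, Finset.sum_sub_distrib, Finset.sum_sub_distrib,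
    ← Finset.mul_sum]
  rw [S7.sum_yy χ hχ1 hr hℓ (le_refl ℓ) (by omega) x,
    S7.sum_yy χ hχ1 hr hℓ (by omega : ℓ ≤ ℓ + 1) hl1 x,
    S7.sum_yy χ hχ1 hr hℓ (by omega : ℓ ≤ n) (le_refl n) x]
  rw [S7.cardK (by omega : 1 ≤ ℓ) (by omega : ℓ ≤ n), S7.cardK (by omega : 1 ≤ ℓ + 1) hl1,
    S7.cardK (by omega : 1 ≤ n) (le_refl n)]
  have e1 : n - ℓ = (n - ℓ - 1) + 1 := by omega
  have e2 : n - (ℓ + 1) = n - ℓ - 1 := by omega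
  have e3 : n - n = 0 := by omega
  rw [e1, e2, e3]
  push_cast
  ring


end
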